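/- Let n_1, …, n_r be positive reals (r ≥ 2) and Q_1, …, Q_r reals, and set h_j = Q_j / n_j. Suppose for every m ∈ {1,…,r}: (1/n_m)·∏_{j≠m}(h_m − h_j) = (∑_{i=1}^r 1/n_i)·h_m^{r−1}. Then ∑_{j=1}^r Q_j = 0. -/

import Mathlib

open Finset

/-- Key algebraic lemma: if `h j = Q j / n j` with `n j > 0` satisfy
`(1/n m) * ∏_{j ≠ m} (h m - h j) = (∑ i, 1/n i) * h m ^ (r-1)` for every `m`,
then `∑ j, Q j = 0`. -/
theorem sum_Q_eq_zero (r : ℕ) (hr : 2 ≤ r) (n Q : Fin r → ℝ)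
    (hn : ∀ j, 0 < n j)
    (h : Fin r → ℝ) (hh : ∀ j, h j = Q j / n j)
    (heq : ∀ m, (1 / n m) * ∏ j ∈ univ.erase m, (h m - h j) =
      (∑ i, 1 / n i) * h m ^ (r - 1)) :
    ∑ j, Q j = 0 := by
  classical
  set S := ∑ i, 1 / n i with hS
  have hne : (univ : Finset (Fin r)).Nonempty := ⟨⟨0, by omega⟩, mem_univ _⟩
  have hSpos : 0 < S := Finset.sum_pos (fun i _ => by
    have := hn i; positivity) hne
  have hQ : ∀ i, Q i = n i * h i := by
    intro i
    have hi := hh i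
    rw [eq_div_iff (hn i).ne'] at hi
    linarith
  set T := univ.filter (fun i => h i ≠ 0) with hT
  -- injectivity of h on nonzero values
  have hinj : ∀ a b : Fin r, h a ≠ 0 → a ≠ b → h a ≠ h b := by
    intro a b ha hab hcon
    have h0 : ∏ j ∈ univ.erase a, (h a - h j) = 0 :=
      Finset.prod_eq_zero (mem_erase.mpr ⟨hab.symm, mem_univ b⟩) (by rw [hcon]; ring)
    have := heq a
    rw [h0, mul_zero] at this
    have hne0 : S * h a ^ (r - 1) ≠ 0 :=
      mul_ne_zero hSpos.ne' (pow_ne_zero _ ha)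
    exact hne0 this.symm
  -- sum reduces to T
  have hsumT : ∑ j, Q j = ∑ j ∈ T, Q j := by
    refine (Finset.sum_subset (subset_univ T) ?_).symm
    intro x _ hx
    have : h x = 0 := by
      by_contra hx0
      exact hx (mem_filter.mpr ⟨mem_univ x, hx0⟩)
    rw [hQ x, this, mul_zero]
  have hcardT : T.card ≤ r := by
    simpa using Finset.card_le_card (subset_univ T)
  -- key identity on T
  have key : ∀ m ∈ T, ∏ j ∈ T.erase m, (h m - h j) = n m * S * h m ^ (T.card - 1) := by
    intro m hm
    have hm0 : h m ≠ 0 := (mem_filter.mp hm).2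
    have hmain := heq m
    have hZcard : T.card + (univ.filter (fun i => ¬ h i ≠ 0)).card = r := by
      rw [hT]
      simpa using Finset.card_filter_add_card_filter_not
        (s := (univ : Finset (Fin r))) (p := fun i => h i ≠ 0)
    set z := (univ.filter (fun i => ¬ h i ≠ 0)).card with hz
    have hsplit : ∏ j ∈ univ.erase m, (h m - h j)
        = (∏ j ∈ T.erase m, (h m - h j)) * h m ^ z := by
      rw [← Finset.prod_filter_mul_prod_filter_not (univ.erase m) (fun i => h i ≠ 0)]
      congr 1
      · apply Finset.prod_congr _ (fun _ _ => rfl)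
        ext j
        simp only [mem_filter, mem_erase, hT, mem_univ, true_and]
        tauto
      · have hset : (univ.erase m).filter (fun i => ¬ h i ≠ 0)
            = univ.filter (fun i => ¬ h i ≠ 0) := by
          ext j
          simp only [mem_filter, mem_erase, mem_univ, true_and, and_true, not_not]
          constructor
          · tauto
          · intro hj
            refine ⟨fun hjm => hm0 ?_, hj⟩
            rw [← hjm]; exact hj
        rw [hset]
        rw [Finset.prod_congr rfl (fun j hj => ?_), Finset.prod_const]
        have : h j = 0 := by simpa using (mem_filter.mp hj).2
        rw [this, sub_zero]
    rw [hsplit] at hmain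
    have hkpos : 1 ≤ T.card := Finset.card_pos.mpr ⟨m, hm⟩
    have hpow : h m ^ (r - 1) = h m ^ z * h m ^ (T.card - 1) := by
      rw [← pow_add]
      congr 1
      omega
    rw [hpow] at hmain
    have hzne : h m ^ z ≠ 0 := pow_ne_zero _ hm0
    have hmain2 : (∏ j ∈ T.erase m, (h m - h j)) * h m ^ z
        = (n m * S * h m ^ (T.card - 1)) * h m ^ z := by
      have hnm := (hn m).ne'
      field_simp at hmain
      linear_combination hmain * h m ^ z
    exact mul_right_cancel₀ hzne hmain2
  -- case analysis on T.card
  rcases Nat.lt_or_ge T.card 3 with hk | hk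
  · interval_cases hc : T.card
    · -- T empty
      rw [hsumT, Finset.card_eq_zero.mp hc, Finset.sum_empty]
    · -- T = {m} : contradiction
      obtain ⟨m, hm⟩ := Finset.card_eq_one.mp hc
      exfalso
      have hmT : m ∈ T := by rw [hm]; exact mem_singleton_self m
      have h1 : (1:ℝ) = n m * S := by
        have hk1 := key m hmT
        rw [hm, Finset.erase_singleton, Finset.prod_empty] at hk1
        norm_num at hk1
        exact hk1
      have hSm : S = 1 / n m + ∑ i ∈ univ.erase m, 1 / n i := by
        rw [hS, ← Finset.add_sum_erase _ _ (mem_univ m)]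
      have hpos : 0 < ∑ i ∈ univ.erase m, 1 / n i := by
        apply Finset.sum_pos (fun i _ => by have := hn i; positivity)
        apply Finset.card_pos.mp
        have : (univ.erase m).card = r - 1 := by simp
        omega
      have hgt : 1 / n m < S := by linarith
      have := mul_lt_mul_of_pos_left hgt (hn m)
      rw [mul_one_div, div_self (hn m).ne'] at this
      linarith
    · -- T = {a, b}
      obtain ⟨a, b, hab, hTab⟩ := Finset.card_eq_two.mp hc
      have haT : a ∈ T := by rw [hTab]; simp
      have hbT : b ∈ T := by rw [hTab]; simp
      have keyA := key a haT
      have keyB := key b hbT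
      rw [hTab] at keyA keyB
      have hea : ({a, b} : Finset (Fin r)).erase a = {b} := by
        rw [Finset.erase_insert (by simpa using hab)]
      have heb : ({a, b} : Finset (Fin r)).erase b = {a} := by
        rw [Finset.pair_comm, Finset.erase_insert (by simpa using hab.symm)]
      rw [hea, Finset.prod_singleton] at keyA
      rw [heb, Finset.prod_singleton] at keyB
      norm_num at keyA keyB
      have hsum2 : n a * h a + n b * h b = 0 := by
        have hz : S * (n a * h a + n b * h b) = 0 := by linarith [keyA, keyB]
        rcases mul_eq_zero.mp hz with h' | h'
        · exact absurd h' hSpos.ne'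
        · exact h'
      rw [hsumT, hTab, Finset.sum_pair hab, hQ a, hQ b, hsum2]
  · -- T.card ≥ 3 : contradiction
    exfalso
    have hTne : T.Nonempty := Finset.card_pos.mp (by omega)
    obtain ⟨b, hbT, hbmax⟩ := Finset.exists_max_image T h hTne
    have hTbne : (T.erase b).Nonempty := by
      apply Finset.card_pos.mp
      rw [Finset.card_erase_of_mem hbT]
      omega
    obtain ⟨a, haTb, hamax⟩ := Finset.exists_max_image (T.erase b) h hTbne
    have haT : a ∈ T := (mem_erase.mp haTb).2
    have hab : a ≠ b := (mem_erase.mp haTb).1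
    have hTane : ((T.erase b).erase a).Nonempty := by
      apply Finset.card_pos.mp
      rw [Finset.card_erase_of_mem haTb, Finset.card_erase_of_mem hbT]
      omega
    obtain ⟨c, hcTa, hcmax⟩ := Finset.exists_max_image ((T.erase b).erase a) h hTane
    have hca : c ≠ a := (mem_erase.mp hcTa).1
    have hcb : c ≠ b := (mem_erase.mp (mem_erase.mp hcTa).2).1
    have hcT : c ∈ T := (mem_erase.mp (mem_erase.mp hcTa).2).2
    have hhne : ∀ x ∈ T, ∀ y, x ≠ y → h x ≠ h y := by
      intro x hx y hxy
      exact hinj x y (mem_filter.mp hx).2 hxy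
    have hhab : h a < h b :=
      lt_of_le_of_ne (hbmax a haT) (hhne a haT b hab)
    have hhca : h c < h a :=
      lt_of_le_of_ne (hamax c (mem_erase.mp hcTa).2) (hhne c hcT a hca)
    have hhcb : h c < h b := lt_trans hhca hhab
    -- product at a is negative
    have keyA := key a haT
    have hbTa : b ∈ T.erase a := mem_erase.mpr ⟨hab.symm, hbT⟩
    rw [← Finset.mul_prod_erase _ _ hbTa] at keyA
    have hposA : 0 < ∏ j ∈ (T.erase a).erase b, (h a - h j) := by
      apply Finset.prod_pos
      intro j hj
      have hjb : j ≠ b := (mem_erase.mp hj).1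
      have hja : j ≠ a := (mem_erase.mp (mem_erase.mp hj).2).1
      have hjT : j ∈ T := (mem_erase.mp (mem_erase.mp hj).2).2
      have hle : h j ≤ h a := hamax j (mem_erase.mpr ⟨hjb, hjT⟩)
      have hneq : h j ≠ h a := hhne j hjT a hja
      have : h j < h a := lt_of_le_of_ne hle hneq
      linarith
    have hAneg : n a * S * h a ^ (T.card - 1) < 0 := by
      rw [← keyA]
      exact mul_neg_of_neg_of_pos (by linarith) hposA
    have hpa : h a ^ (T.card - 1) < 0 := by
      nlinarith [mul_pos (hn a) hSpos]
    -- product at c is positive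
    have keyC := key c hcT
    have haTc : a ∈ T.erase c := mem_erase.mpr ⟨hca.symm, haT⟩
    rw [← Finset.mul_prod_erase _ _ haTc] at keyC
    have hbTc : b ∈ (T.erase c).erase a :=
      mem_erase.mpr ⟨hab.symm, mem_erase.mpr ⟨hcb.symm, hbT⟩⟩
    rw [← Finset.mul_prod_erase _ _ hbTc] at keyC
    have hposC : 0 < ∏ j ∈ ((T.erase c).erase a).erase b, (h c - h j) := by
      apply Finset.prod_pos
      intro j hj
      have hjb : j ≠ b := (mem_erase.mp hj).1
      have hja : j ≠ a := (mem_erase.mp (mem_erase.mp hj).2).1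
      have hjc : j ≠ c := (mem_erase.mp (mem_erase.mp (mem_erase.mp hj).2).2).1
      have hjT : j ∈ T := (mem_erase.mp (mem_erase.mp (mem_erase.mp hj).2).2).2
      have hle : h j ≤ h c :=
        hcmax j (mem_erase.mpr ⟨hja, mem_erase.mpr ⟨hjb, hjT⟩⟩)
      have hneq : h j ≠ h c := hhne j hjT c hjc
      have : h j < h c := lt_of_le_of_ne hle hneq
      linarith
    have hCpos : 0 < n c * S * h c ^ (T.card - 1) := by
      rw [← keyC]
      exact mul_pos_of_neg_of_neg (by linarith)
        (mul_neg_of_neg_of_pos (by linarith) hposC)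
    have hpc : 0 < h c ^ (T.card - 1) := by
      nlinarith [mul_pos (hn c) hSpos]
    -- parity contradiction
    rcases Nat.even_or_odd (T.card - 1) with hev | hod
    · linarith [hev.pow_nonneg (h a)]
    · have hha : h a < 0 := hod.pow_neg_iff.mp hpa
      have hhc : h c < 0 := by linarith
      linarith [hod.pow_neg hhc]
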